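/- Under the tail-correction substitution for the NIG distribution (μ = μ⋆/√η with η chosen as η⋆(1+μ⋆² − |μ⋆|√(1+μ⋆²))²), the tail asymmetry ratio γ = ξ_L/ξ_R equals 1 + 2(μ⋆² + μ⋆·√(1+μ⋆²)) for μ⋆ ≥ 0, depending only on μ⋆. -/

import Mathlib

theorem NIG_tail_correction_gamma (σ ηs : ℝ) (hσ : σ > 0) (hηs : ηs > 0)
    (μs : ℝ) (hμs : 0 ≤ μs) :
    let η : ℝ := ηs * (1 + μs ^ 2 - |μs| * Real.sqrt (1 + μs ^ 2)) ^ 2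
    let μ : ℝ := μs / Real.sqrt η
    let ξL : ℝ := (1 + μ ^ 2 * η + μ * Real.sqrt (η * (1 + μ ^ 2 * η))) / (σ * Real.sqrt η)
    let ξR : ℝ := (1 + μ ^ 2 * η - μ * Real.sqrt (η * (1 + μ ^ 2 * η))) / (σ * Real.sqrt η)
    ξL / ξR = 1 + 2 * (μs ^ 2 + μs * Real.sqrt (1 + μs ^ 2)) := by
  intro η μ ξL ξR
  have hs1 : (0:ℝ) < 1 + μs ^ 2 := by positivity
  set s := Real.sqrt (1 + μs ^ 2) with hsdef
  have hs0 : 0 < s := Real.sqrt_pos.mpr hs1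
  have hs2 : s ^ 2 = 1 + μs ^ 2 := Real.sq_sqrt hs1.le
  have hsμ : μs < s := by nlinarith
  have habs : |μs| = μs := abs_of_nonneg hμs
  have hc : (0:ℝ) < 1 + μs ^ 2 - |μs| * s := by rw [habs]; nlinarith
  have hη : 0 < η := by
    show 0 < ηs * (1 + μs ^ 2 - |μs| * s) ^ 2
    positivity
  have hsqη : 0 < Real.sqrt η := Real.sqrt_pos.mpr hη
  have hsqη2 : Real.sqrt η ^ 2 = η := Real.sq_sqrt hη.le
  have hμ2 : μ ^ 2 * η = μs ^ 2 := by
    show (μs / Real.sqrt η) ^ 2 * η = μs ^ 2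
    field_simp
    rw [hsqη2]
  have hroot : Real.sqrt (η * (1 + μs ^ 2)) = Real.sqrt η * s := by
    rw [hsdef, Real.sqrt_mul hη.le]
  have hμr : μ * (Real.sqrt η * s) = μs * s := by
    show μs / Real.sqrt η * (Real.sqrt η * s) = μs * s
    field_simp
  have hξL : ξL = (1 + μs ^ 2 + μs * s) / (σ * Real.sqrt η) := by
    show (1 + μ ^ 2 * η + μ * Real.sqrt (η * (1 + μ ^ 2 * η))) / (σ * Real.sqrt η) = _
    rw [hμ2, hroot, hμr]
  have hξR : ξR = (1 + μs ^ 2 - μs * s) / (σ * Real.sqrt η) := by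
    show (1 + μ ^ 2 * η - μ * Real.sqrt (η * (1 + μ ^ 2 * η))) / (σ * Real.sqrt η) = _
    rw [hμ2, hroot, hμr]
  have hden : (0:ℝ) < 1 + μs ^ 2 - μs * s := by rw [habs] at hc; exact hc
  have key : (1 + μs ^ 2 + μs * s)
      = (1 + 2 * (μs ^ 2 + μs * s)) * (1 + μs ^ 2 - μs * s) := by nlinarith [hs2]
  have hbk : (1 + μs ^ 2 - μs * s) / (σ * Real.sqrt η) ≠ 0 := by positivity
  rw [hξL, hξR, key, mul_div_assoc]
  exact mul_div_cancel_right₀ _ hbk
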